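/- If e is an element of a finite matroid M that is neither a loop nor a coloop, then the h-polynomials of the independence complexes satisfy the deletion–contraction relation h_{Δ(M)}(t) = h_{Δ(M−e)}(t) + h_{Δ(M/e)}(t). -/

import Mathlib

open Finset Polynomial

def fVec {V : Type*} (Δ : Finset (Finset V)) (i : ℕ) : ℤ :=
  ((Δ.filter (fun F => F.card = i)).card : ℤ)

def hVec {V : Type*} (Δ : Finset (Finset V)) (s i : ℕ) : ℤ :=
  ∑ k ∈ Finset.range (i + 1), (-1 : ℤ) ^ (i + k) * fVec Δ k * ((s - k).choose (i - k))

noncomputable def hPoly {V : Type*} (Δ : Finset (Finset V)) (s : ℕ) : Polynomial ℤ :=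
  ∑ i ∈ Finset.range (s + 1), C (hVec Δ s i) * X ^ (s - i)

open scoped Classical in
/-- The independence complex of a matroid: its faces are the independent sets. -/
noncomputable def indepComplex {α : Type*} [Fintype α] (M : Matroid α) :
    Finset (Finset α) :=
  Finset.univ.powerset.filter (fun F => M.Indep (F : Set α))

lemma mem_indepComplex {α : Type*} [Fintype α] (M : Matroid α) (F : Finset α) :
    F ∈ indepComplex M ↔ M.Indep (F : Set α) := by
  classical
  simp [indepComplex]

lemma fVec_split {α : Type*} [Fintype α] (M M' : Matroid α) (e : α)
    (hM'I : ∀ I : Set α, M'.Indep I ↔ e ∉ I ∧ M.Indep (insert e I)) (k : ℕ) :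
    fVec (indepComplex M) k =
      fVec (indepComplex (M.restrict (M.E \ {e}))) k +
      (if k = 0 then 0 else fVec (indepComplex M') (k - 1)) := by
  classical
  have hsplit :
      ((indepComplex M).filter (fun F => F.card = k)).card =
        (((indepComplex M).filter (fun F => F.card = k)).filter (fun F => e ∉ F)).card +
          (((indepComplex M).filter (fun F => F.card = k)).filter (fun F => e ∈ F)).card := by
    have h2 : (((indepComplex M).filter (fun F => F.card = k)).filter (fun F => e ∈ F)).card +
        (((indepComplex M).filter (fun F => F.card = k)).filter (fun F => e ∉ F)).card =
        ((indepComplex M).filter (fun F => F.card = k)).card :=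
      Finset.card_filter_add_card_filter_not (p := fun F => e ∈ F)
    omega
  have hdel :
      ((indepComplex M).filter (fun F => F.card = k)).filter (fun F => e ∉ F) =
        (indepComplex (M.restrict (M.E \ {e}))).filter (fun F => F.card = k) := by
    ext F
    simp only [Finset.mem_filter, mem_indepComplex, Matroid.restrict_indep_iff]
    constructor
    · rintro ⟨⟨hI, hc⟩, he⟩
      exact ⟨⟨hI, fun x hx => ⟨hI.subset_ground hx, by rintro rfl; exact he hx⟩⟩, hc⟩
    · rintro ⟨⟨hI, hsub⟩, hc⟩
      exact ⟨⟨hI, hc⟩, fun he => (hsub he).2 rfl⟩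
  have hcon :
      (((indepComplex M).filter (fun F => F.card = k)).filter (fun F => e ∈ F)).card =
        if k = 0 then 0 else ((indepComplex M').filter (fun F => F.card = k - 1)).card := by
    split_ifs with hk
    · subst hk
      rw [Finset.card_eq_zero, Finset.filter_eq_empty_iff]
      intro F hF
      simp only [Finset.mem_filter, Finset.card_eq_zero] at hF
      rw [hF.2]
      simp
    · apply Finset.card_bij (fun F _ => F.erase e)
      · intro F hF
        simp only [Finset.mem_filter, mem_indepComplex] at hF ⊢
        obtain ⟨⟨hI, hc⟩, heF⟩ := hF
        refine ⟨?_, by rw [Finset.card_erase_of_mem heF, hc]⟩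
        rw [hM'I]
        constructor
        · simp
        · have : (insert e (↑(F.erase e) : Set α)) = (F : Set α) := by
            rw [Finset.coe_erase, Set.insert_diff_singleton,
              Set.insert_eq_of_mem (by exact_mod_cast heF)]
          rw [this]; exact hI
      · intro F hF G hG h
        simp only [Finset.mem_filter] at hF hG
        have := congrArg (insert e) h
        rwa [Finset.insert_erase hF.2, Finset.insert_erase hG.2] at this
      · intro J hJ
        simp only [Finset.mem_filter, mem_indepComplex] at hJ
        obtain ⟨hJI, hJc⟩ := hJ
        have heJ : e ∉ J := by
          rw [hM'I] at hJI
          exact fun h => hJI.1 (by exact_mod_cast h)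
        refine ⟨insert e J, ?_, ?_⟩
        · simp only [Finset.mem_filter, mem_indepComplex]
          rw [hM'I] at hJI
          refine ⟨⟨?_, ?_⟩, Finset.mem_insert_self e J⟩
          · rw [Finset.coe_insert]; exact hJI.2
          · rw [Finset.card_insert_of_notMem heJ, hJc]; omega
        · rw [Finset.erase_insert heJ]
  unfold fVec
  rw [hsplit, hdel, hcon]
  split_ifs <;> push_cast <;> ring

lemma hVec_zero {V : Type*} (Δ : Finset (Finset V)) (s : ℕ) :
    hVec Δ s 0 = fVec Δ 0 := by
  simp [hVec]

lemma hVec_split {V W U : Type*} (Δ : Finset (Finset V)) (Δd : Finset (Finset W))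
    (Δc : Finset (Finset U))
    (hf : ∀ k, fVec Δ k = fVec Δd k + (if k = 0 then 0 else fVec Δc (k - 1)))
    (s j : ℕ) :
    hVec Δ (s + 1) (j + 1) = hVec Δd (s + 1) (j + 1) + hVec Δc s j := by
  unfold hVec
  have step : ∀ k ∈ Finset.range (j + 2),
      (-1 : ℤ) ^ (j + 1 + k) * fVec Δ k * ((s + 1 - k).choose (j + 1 - k)) =
        (-1 : ℤ) ^ (j + 1 + k) * fVec Δd k * ((s + 1 - k).choose (j + 1 - k)) +
          (if k = 0 then 0 else
            (-1 : ℤ) ^ (j + 1 + k) * fVec Δc (k - 1) * ((s + 1 - k).choose (j + 1 - k))) := by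
    intro k _
    rw [hf k]
    split_ifs <;> ring
  rw [show j + 1 + 1 = j + 2 from rfl, Finset.sum_congr rfl step, Finset.sum_add_distrib]
  congr 1
  rw [Finset.sum_range_succ']
  rw [if_pos rfl, add_zero]
  apply Finset.sum_congr rfl
  intro m _
  rw [if_neg (Nat.succ_ne_zero m)]
  have h1 : (-1 : ℤ) ^ (j + 1 + (m + 1)) = (-1 : ℤ) ^ (j + m) := by
    rw [show j + 1 + (m + 1) = (j + m) + 2 by ring, pow_add]
    norm_num
  have h2 : s + 1 - (m + 1) = s - m := by omega
  have h3 : j + 1 - (m + 1) = j - m := by omega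
  rw [h1, h2, h3, Nat.add_sub_cancel]

/-- Deletion–contraction for `h`-polynomials of independence complexes: if `e` is neither a
loop nor a coloop of the rank-`r` matroid `M`, then
`h_{Δ(M)}(t) = h_{Δ(M−e)}(t) + h_{Δ(M/e)}(t)`.  Here the deletion `M − e` is the
restriction of `M` to `M.E \ {e}`, and the contraction `M/e` is characterized by its
ground set `M.E \ {e}` and independent sets `I` with `e ∉ I` and `insert e I` independent
in `M`. -/
theorem hPoly_deletion_contraction {α : Type*} [Fintype α] (M : Matroid α) (e : α) (r : ℕ)
    (he : e ∈ M.E)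
    (hnotloop : M.Indep {e})
    (hnotcoloop : ∃ B, M.IsBase B ∧ e ∉ B)
    (hrank : ∀ B, M.IsBase B → B.ncard = r)
    (M' : Matroid α)
    (hM'E : M'.E = M.E \ {e})
    (hM'I : ∀ I : Set α, M'.Indep I ↔ e ∉ I ∧ M.Indep (insert e I)) :
    hPoly (indepComplex M) r =
      hPoly (indepComplex (M.restrict (M.E \ {e}))) r + hPoly (indepComplex M') (r - 1) := by
  classical
  have hf := fVec_split M M' e hM'I
  -- r ≥ 1
  obtain ⟨B, hB, heB⟩ := hnotloop.exists_isBase_superset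
  have hr1 : 1 ≤ r := by
    rw [← hrank B hB]
    have heB' : e ∈ B := heB rfl
    have : B.Nonempty := ⟨e, heB'⟩
    exact (Set.ncard_pos (Set.toFinite B)).2 this
  obtain ⟨s, rfl⟩ : ∃ s, r = s + 1 := ⟨r - 1, by omega⟩
  simp only [Nat.add_sub_cancel]
  unfold hPoly
  rw [Finset.sum_range_succ'
      (fun i => C (hVec (indepComplex M) (s + 1) i) * X ^ (s + 1 - i)) (s + 1),
    Finset.sum_range_succ'
      (fun i => C (hVec (indepComplex (M.restrict (M.E \ {e}))) (s + 1) i) * X ^ (s + 1 - i))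
      (s + 1)]
  have h0 : hVec (indepComplex M) (s + 1) 0 =
      hVec (indepComplex (M.restrict (M.E \ {e}))) (s + 1) 0 := by
    rw [hVec_zero, hVec_zero, hf 0]
    simp
  rw [h0]
  have hterm : ∀ i ∈ Finset.range (s + 1),
      C (hVec (indepComplex M) (s + 1) (i + 1)) * X ^ (s + 1 - (i + 1)) =
        C (hVec (indepComplex (M.restrict (M.E \ {e}))) (s + 1) (i + 1)) * X ^ (s + 1 - (i + 1)) +
          C (hVec (indepComplex M') s i) * X ^ (s - i) := by
    intro i _
    have hx : s + 1 - (i + 1) = s - i := by omega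
    rw [hx, hVec_split _ _ _ hf s i, C_add, add_mul]
  rw [Finset.sum_congr rfl hterm, Finset.sum_add_distrib]
  ring
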